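/- Let D be a division ring of characteristic 3 with derivation δ, and let c, d ∈ D. The polynomial f(t) = t³ − ct − d ∈ D[t;δ] is irreducible in D[t;δ] if and only if for all z ∈ D both V₃(z) − cz ≠ d and V₃(z) − zc + δ(c) ≠ d hold. -/

import Mathlib

open Finsupp

section Defs

variable {D R : Type*}

/-- `δ` is a derivation on the (possibly noncommutative) ring `D`. -/
def IsDeriv [Ring D] (δ : D → D) : Prop :=
  (∀ a b, δ (a + b) = δ a + δ b) ∧ ∀ a b, δ (a * b) = a * δ b + δ a * b

/-- `(R, i, t, coeff)` realizes the differential polynomial ring `D[t;δ]`: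
`t * a = a * t + δ a` for `a ∈ D`, and every element of `R` is uniquely of
the form `∑ aₙ tⁿ`, the `aₙ` being recorded by the additive equivalence `coeff`. -/
def IsDiffPolyRing [Ring D] [Ring R] (δ : D → D) (i : D →+* R) (t : R)
    (coeff : R ≃+ (ℕ →₀ D)) : Prop :=
  (∀ a : D, t * i a = i a * t + i (δ a)) ∧
    ∀ (n : ℕ) (a : D), coeff.symm (Finsupp.single n a) = i a * t ^ n

/-- `r` has degree `< m`. -/
def DegLt [Ring D] [Ring R] (coeff : R ≃+ (ℕ →₀ D)) (m : ℕ) (r : R) : Prop :=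
  ∀ n, m ≤ n → coeff r n = 0

/-- `f` is monic of degree `m`. -/
def MonicDeg [Ring D] [Ring R] (coeff : R ≃+ (ℕ →₀ D)) (m : ℕ) (f : R) : Prop :=
  coeff f m = 1 ∧ ∀ n, m < n → coeff f n = 0

/-- The carrier of the Petit algebra `S_f`: all polynomials of degree `< m`. -/
def SfSet [Ring D] [Ring R] (coeff : R ≃+ (ℕ →₀ D)) (m : ℕ) : Set R :=
  {r | DegLt coeff m r}

/-- `mul` is the Petit multiplication: `mul x y = x·y mod_r f`, i.e. `mul x y`
has degree `< m` and differs from `x·y` by a left multiple of `f`. -/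
def IsPetitMul [Ring D] [Ring R] (coeff : R ≃+ (ℕ →₀ D)) (f : R) (m : ℕ)
    (mul : R → R → R) : Prop :=
  ∀ x y : R, DegLt coeff m (mul x y) ∧ ∃ q : R, x * y = q * f + mul x y

/-- `f` is right semi-invariant: `f·a ∈ D·f` for all `a ∈ D`. -/
def RightSemiInvariant [Ring D] [Ring R] (i : D →+* R) (f : R) : Prop :=
  ∀ a : D, ∃ b : D, f * i a = i b * f

/-- `f` is two-sided (invariant): the left ideal `Rf` is a two-sided ideal. -/
def TwoSidedElem [Ring R] (f : R) : Prop :=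
  ∀ r : R, ∃ q : R, f * r = q * f

/-- `f` (of degree `m`) is irreducible: it has no factorization into factors
of degree `< m`. -/
def IrredDeg [Ring D] [Ring R] (coeff : R ≃+ (ℕ →₀ D)) (m : ℕ) (f : R) : Prop :=
  ¬∃ g h : R, f = g * h ∧ DegLt coeff m g ∧ DegLt coeff m h

/-- `f` (of degree `m`) is irreducible as a polynomial with coefficients in
the subfield `Fset` of `D`. -/
def IrredOver [Ring D] [Ring R] (coeff : R ≃+ (ℕ →₀ D)) (Fset : Set D) (m : ℕ)
    (f : R) : Prop :=
  ¬∃ g h : R, f = g * h ∧ DegLt coeff m g ∧ DegLt coeff m h ∧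
    (∀ n, coeff g n ∈ Fset) ∧ ∀ n, coeff h n ∈ Fset

/-- Left nucleus of the algebra `(S, mul)`. -/
def LeftNuc [Ring R] (S : Set R) (mul : R → R → R) : Set R :=
  {x ∈ S | ∀ y ∈ S, ∀ z ∈ S, mul (mul x y) z = mul x (mul y z)}

/-- Middle nucleus of the algebra `(S, mul)`. -/
def MidNuc [Ring R] (S : Set R) (mul : R → R → R) : Set R :=
  {x ∈ S | ∀ y ∈ S, ∀ z ∈ S, mul (mul y x) z = mul y (mul x z)}

/-- Right nucleus of the algebra `(S, mul)`. -/
def RightNuc [Ring R] (S : Set R) (mul : R → R → R) : Set R :=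
  {x ∈ S | ∀ y ∈ S, ∀ z ∈ S, mul (mul y z) x = mul y (mul z x)}

/-- `(S, mul)` is a division algebra: all nonzero left and right
multiplications are bijective. -/
def IsDivAlg [Ring R] (S : Set R) (mul : R → R → R) : Prop :=
  ∀ x ∈ S, x ≠ 0 → Set.BijOn (mul x) S S ∧ Set.BijOn (fun y => mul y x) S S

/-- `(S, mul)` is associative. -/
def IsAssocOn [Ring R] (S : Set R) (mul : R → R → R) : Prop :=
  ∀ x ∈ S, ∀ y ∈ S, ∀ z ∈ S, mul (mul x y) z = mul x (mul y z)

/-- The constants of `δ`. -/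
def ConstSet [Ring D] (δ : D → D) : Set D := {a | δ a = 0}

/-- The center of `D`. -/
def CenterSet (D : Type*) [Ring D] : Set D := {a | ∀ b, a * b = b * a}

/-- `F₀ = Const(δ) ∩ C(D)`. -/
def F0Set [Ring D] (δ : D → D) : Set D := ConstSet δ ∩ CenterSet D

/-- The elements of the Petit algebra all of whose coefficients lie in `Fset`,
e.g. `Fset ⊕ Fset·t ⊕ ⋯ ⊕ Fset·t^{m-1}`. -/
def SubCoeffSet [Ring D] [Ring R] (coeff : R ≃+ (ℕ →₀ D)) (m : ℕ)
    (Fset : Set D) : Set R :=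
  {r | DegLt coeff m r ∧ ∀ n, coeff r n ∈ Fset}

/-- `S ⊆ R` has dimension `k` over the subfield `Fset ⊆ D` (acting through `i`):
there is an `Fset`-basis of size `k`. -/
def HasDim [Ring D] [Ring R] (Fset : Set D) (i : D →+* R) (S : Set R) (k : ℕ) : Prop :=
  ∃ b : Fin k → R, (∀ j, b j ∈ S) ∧
    ∀ x ∈ S, ∃! c : Fin k → D, (∀ j, c j ∈ Fset) ∧ x = ∑ j, i (c j) * b j

/-- `S ⊆ D` has dimension `k` over the subfield `Fset ⊆ D`. -/
def HasDimIn [Ring D] (Fset : Set D) (S : Set D) (k : ℕ) : Prop :=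
  ∃ b : Fin k → D, (∀ j, b j ∈ S) ∧
    ∀ x ∈ S, ∃! c : Fin k → D, (∀ j, c j ∈ Fset) ∧ x = ∑ j, c j * b j

/-- Substitution of `x` for `t` in `r = ∑ aₙ tⁿ`. -/
noncomputable def substT [Ring D] [Ring R] (coeff : R ≃+ (ℕ →₀ D)) (i : D →+* R) (r x : R) : R :=
  (coeff r).sum fun n c => i c * x ^ n

/-- `V_f(b)`: the constant `f(t) − f(t−b)`. -/
noncomputable def Vf [Ring D] [Ring R] (coeff : R ≃+ (ℕ →₀ D)) (i : D →+* R) (t f : R) (b : D) : D :=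
  coeff (f - substT coeff i f (t - i b)) 0

/-- `V_p(b)`: the constant with `(t−b)^p = t^p − V_p(b)`. -/
noncomputable def Vp [Ring D] [Ring R] (coeff : R ≃+ (ℕ →₀ D)) (i : D →+* R) (t : R) (p : ℕ)
    (b : D) : D :=
  coeff (t ^ p - (t - i b) ^ p) 0

/-- For commutative coefficients, `V_p(b) = b^p + δ^{p−1}(b)`. -/
def VpFun [Ring D] (δ : D → D) (p : ℕ) : D → D := fun b => b ^ p + δ^[p - 1] b

/-- `V(a) = V_{p^e}(a) + c₁ V_{p^{e−1}}(a) + ⋯ + c_e a`, computed with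
`V_p(b) = b^p + δ^{p−1}(b)` (commutative case). -/
def Vg [Ring D] (δ : D → D) (p e : ℕ) (c : Fin e → D) : D → D :=
  fun a => (VpFun δ p)^[e] a + ∑ j : Fin e, c j * (VpFun δ p)^[e - 1 - (j : ℕ)] a

/-- `V(a) = V_{p^e}(a) + c₁ V_{p^{e−1}}(a) + ⋯ + c_e a`, with `V_p` defined by
the identity `(t−b)^p = t^p − V_p(b)` in `D[t;δ]`. -/
noncomputable def VgR [Ring D] [Ring R] (coeff : R ≃+ (ℕ →₀ D)) (i : D →+* R) (t : R) (p e : ℕ)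
    (c : Fin e → D) : D → D :=
  fun a => (Vp coeff i t p)^[e] a + ∑ j : Fin e, c j * (Vp coeff i t p)^[e - 1 - (j : ℕ)] a

/-- The map `G_{id,−a}` sending `∑ bₙ tⁿ` to `∑ bₙ (t−a)ⁿ`. -/
noncomputable def Gmap [Ring D] [Ring R] (coeff : R ≃+ (ℕ →₀ D)) (i : D →+* R) (t : R) (a : D) :
    R → R :=
  fun r => substT coeff i r (t - i a)

/-- `H` is an isomorphism of `Fset`-algebras from `(S, mul)` onto `(S', mul')`. -/
def IsAlgIso [Ring D] [Ring R] (Fset : Set D) (i : D →+* R) (S S' : Set R)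
    (mul mul' : R → R → R) (H : R → R) : Prop :=
  Set.BijOn H S S' ∧ (∀ x ∈ S, ∀ y ∈ S, H (x + y) = H x + H y) ∧
    (∀ x ∈ S, ∀ y ∈ S, H (mul x y) = mul' (H x) (H y)) ∧ H 1 = 1 ∧
    ∀ a ∈ Fset, ∀ x ∈ S, H (i a * x) = i a * H x

/-- `H` is an `Fset`-algebra automorphism of the Petit algebra `(S, mul)`. -/
def IsAut [Ring D] [Ring R] (Fset : Set D) (i : D →+* R) (S : Set R)
    (mul : R → R → R) (H : R → R) : Prop :=
  IsAlgIso Fset i S S mul mul H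

/-- The operator `δ^{p^e} + c₁ δ^{p^{e−1}} + ⋯ + c_e δ` vanishes on `Cset`,
i.e. the `p`-polynomial `t^{p^e} + c₁ t^{p^{e−1}} + ⋯ + c_e t` annihilates `δ|_{Cset}`. -/
def PPolyAnnOn [Ring D] (δ : D → D) (Cset : Set D) (p e : ℕ) (c : Fin e → D) : Prop :=
  ∀ a ∈ Cset, δ^[p ^ e] a + ∑ j : Fin e, c j * δ^[p ^ (e - 1 - (j : ℕ))] a = 0

/-- `t^{p^e} + c₁ t^{p^{e−1}} + ⋯ + c_e t` (coefficients in `Fset`) is the minimum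
`p`-polynomial of `δ` restricted to `Cset`. -/
def IsMinPPoly [Ring D] (δ : D → D) (Cset Fset : Set D) (p e : ℕ)
    (c : Fin e → D) : Prop :=
  (∀ j, c j ∈ Fset) ∧ PPolyAnnOn δ Cset p e c ∧
    ∀ e' : ℕ, e' < e → ∀ c' : Fin e' → D, (∀ j, c' j ∈ Fset) →
      ¬PPolyAnnOn δ Cset p e' c'

/-- The natural map from `D[X]` to `R`, `∑ aₙ Xⁿ ↦ ∑ aₙ tⁿ`. -/
noncomputable def polyToR [Ring D] [Ring R] (i : D →+* R) (t : R) (q : Polynomial D) : R :=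
  q.sum fun n a => i a * t ^ n

/-- The element `f ∈ R` rewritten as an ordinary polynomial in `D[X]`. -/
noncomputable def coeffPoly [Ring D] [Ring R] (coeff : R ≃+ (ℕ →₀ D)) (f : R) : Polynomial D :=
  (coeff f).sum fun n a => Polynomial.C a * Polynomial.X ^ n

/-- The set `T = Fset ⊕ Fset·t ⊕ ⋯ ⊕ Fset·t^{m−1} ⊆ S_f` is isomorphic, as a
ring, to the quotient `Fset[X]/(f)`: the natural map `θ : ∑ aₙ Xⁿ ↦ ∑ aₙ tⁿ`,
from polynomials over `Fset` of degree `< m` with multiplication given by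
reduction mod `f`, is a bijection onto `T` respecting all the operations. -/
def IsPolyQuotIso [Ring D] [Ring R] (Fset : Set D) (i : D →+* R)
    (coeff : R ≃+ (ℕ →₀ D)) (t f : R) (m : ℕ) (mul : R → R → R) (T : Set R) : Prop :=
  Set.BijOn (polyToR i t)
    {q : Polynomial D | (∀ n, q.coeff n ∈ Fset) ∧ q.degree < (m : WithBot ℕ)} T ∧
  (∀ q q' : Polynomial D, polyToR i t (q + q') = polyToR i t q + polyToR i t q') ∧
  polyToR i t 1 = 1 ∧
  ∀ q ∈ {q : Polynomial D | (∀ n, q.coeff n ∈ Fset) ∧ q.degree < (m : WithBot ℕ)},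
    ∀ q' ∈ {q : Polynomial D | (∀ n, q.coeff n ∈ Fset) ∧ q.degree < (m : WithBot ℕ)},
      ∃ s r : Polynomial D, q * q' = s * coeffPoly coeff f + r ∧
        r.degree < (m : WithBot ℕ) ∧
        polyToR i t r = mul (polyToR i t q) (polyToR i t q')

end Defs
section Aux
variable {D R : Type*} [DivisionRing D] [Ring R] {δ : D → D} {i : D →+* R} {t : R}
  {coeff : R ≃+ (ℕ →₀ D)}

lemma aux_csingle (hR : IsDiffPolyRing δ i t coeff) (n : ℕ) (a : D) :
    coeff (i a * t ^ n) = Finsupp.single n a := by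
  rw [← hR.2 n a, AddEquiv.apply_symm_apply]

lemma aux_ci (hR : IsDiffPolyRing δ i t coeff) (a : D) :
    coeff (i a) = Finsupp.single 0 a := by
  simpa using aux_csingle hR 0 a

lemma aux_ct (hR : IsDiffPolyRing δ i t coeff) :
    coeff t = Finsupp.single 1 (1 : D) := by
  simpa using aux_csingle hR 1 (1 : D)

lemma aux_ctpow (hR : IsDiffPolyRing δ i t coeff) (n : ℕ) :
    coeff (t ^ n) = Finsupp.single n (1 : D) := by
  simpa using aux_csingle hR n 1

lemma aux_cit (hR : IsDiffPolyRing δ i t coeff) (a : D) :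
    coeff (i a * t) = Finsupp.single 1 a := by
  simpa using aux_csingle hR 1 a

lemma aux_i_inj (hR : IsDiffPolyRing δ i t coeff) {a : D} (h : i a = 0) : a = 0 := by
  have h1 := aux_ci hR a
  rw [h, map_zero] at h1
  simpa using (congrArg (fun s : ℕ →₀ D => s 0) h1).symm

lemma aux_imul (hR : IsDiffPolyRing δ i t coeff) (a : D) (r : R) (n : ℕ) :
    coeff (i a * r) n = a * coeff r n := by
  have key : ∀ s : ℕ →₀ D, coeff (i a * coeff.symm s) n = a * s n := by
    intro s
    induction s using Finsupp.induction with
    | zero => simp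
    | single_add k b s hk hb ih =>
      rw [map_add, mul_add, map_add, hR.2 k b, ← mul_assoc, ← map_mul,
        Finsupp.add_apply, Finsupp.add_apply, mul_add, aux_csingle hR]
      rw [ih]
      congr 1
      simp only [Finsupp.single_apply]
      split_ifs <;> simp
  have := key (coeff r)
  rwa [coeff.symm_apply_apply] at this

lemma aux_deriv_zero (hδ : IsDeriv δ) : δ 0 = 0 := by
  have h := hδ.1 0 0
  rw [add_zero] at h
  exact (left_eq_add.mp h)

lemma aux_tmul (hR : IsDiffPolyRing δ i t coeff) (hδ : IsDeriv δ) (r : R) (n : ℕ) :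
    coeff (t * r) (n + 1) = coeff r n + δ (coeff r (n + 1)) := by
  have key : ∀ s : ℕ →₀ D, coeff (t * coeff.symm s) (n + 1) = s n + δ (s (n + 1)) := by
    intro s
    induction s using Finsupp.induction with
    | zero => simp [aux_deriv_zero hδ]
    | single_add k b s hk hb ih =>
      have expand : t * coeff.symm (Finsupp.single k b + s)
          = i b * t ^ (k + 1) + i (δ b) * t ^ k + t * coeff.symm s := by
        rw [map_add, mul_add, hR.2 k b, ← mul_assoc, hR.1 b, add_mul, mul_assoc, ← pow_succ']
      rw [expand]
      simp only [map_add, Finsupp.add_apply, aux_csingle hR]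
      rw [ih, hδ.1]
      simp only [Finsupp.single_apply]
      by_cases h1 : k = n
      · subst h1
        simp [aux_deriv_zero hδ, add_assoc]
      · by_cases h2 : k = n + 1
        · subst h2
          simp only [if_pos rfl, if_neg (by omega : ¬ n + 1 + 1 = n + 1),
            if_neg (by omega : ¬ n + 1 = n)]
          simp only [↓reduceIte, zero_add]
          abel
        · simp only [if_neg (by omega : ¬ k + 1 = n + 1), if_neg h2, if_neg h1]
          simp [aux_deriv_zero hδ]
  have := key (coeff r)
  rwa [coeff.symm_apply_apply] at this


lemma aux_tpow_mul (hR : IsDiffPolyRing δ i t coeff) (hδ : IsDeriv δ) (m : ℕ) (r : R) (b : ℕ)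
    (hr : DegLt coeff (b + 1) r) :
    DegLt coeff (b + m + 1) (t ^ m * r) ∧ coeff (t ^ m * r) (b + m) = coeff r b := by
  induction m with
  | zero =>
    constructor
    · simpa using hr
    · simp
  | succ m ih =>
    obtain ⟨h1, h2⟩ := ih
    have hts : t ^ (m + 1) * r = t * (t ^ m * r) := by rw [pow_succ']; rw [mul_assoc]
    constructor
    · intro n hn
      obtain ⟨n', rfl⟩ : ∃ n', n = n' + 1 := ⟨n - 1, by omega⟩
      rw [hts, aux_tmul hR hδ, h1 n' (by omega), h1 (n' + 1) (by omega), aux_deriv_zero hδ,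
        add_zero]
    · rw [hts, show b + (m + 1) = (b + m) + 1 from rfl, aux_tmul hR hδ, h2,
        h1 (b + m + 1) (by omega), aux_deriv_zero hδ, add_zero]

lemma aux_mul_top (hR : IsDiffPolyRing δ i t coeff) (hδ : IsDeriv δ) (a b : ℕ) (g h : R)
    (hg : DegLt coeff (a + 1) g) (hh : DegLt coeff (b + 1) h) :
    coeff (g * h) (a + b) = coeff g a * coeff h b := by
  have key : ∀ s : ℕ →₀ D, (∀ n, a < n → s n = 0) →
      coeff (coeff.symm s * h) (a + b) = s a * coeff h b := by
    intro s
    induction s using Finsupp.induction with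
    | zero => simp
    | single_add k x s hk hx ih =>
      intro hs
      have hsk : s k = 0 := Finsupp.notMem_support_iff.mp hk
      have hkle : k ≤ a := by
        by_contra hlt
        have := hs k (by omega)
        rw [Finsupp.add_apply, Finsupp.single_apply, if_pos rfl, hsk, add_zero] at this
        exact hx this
      have hs' : ∀ n, a < n → s n = 0 := by
        intro n hn
        have := hs n hn
        rw [Finsupp.add_apply, Finsupp.single_apply,
          if_neg (by omega : ¬ k = n), zero_add] at this
        exact this
      have expand : coeff.symm (Finsupp.single k x + s) * h
          = i x * (t ^ k * h) + coeff.symm s * h := by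
        rw [map_add, hR.2 k x, add_mul, mul_assoc]
      rw [expand]
      simp only [map_add, Finsupp.add_apply]
      rw [ih hs', add_mul]
      congr 1
      rw [aux_imul hR]
      rcases eq_or_lt_of_le hkle with hka | hka
      · subst hka
        rw [add_comm k b, (aux_tpow_mul hR hδ k h b hh).2, Finsupp.single_apply, if_pos rfl]
      · rw [(aux_tpow_mul hR hδ k h b hh).1 (a + b) (by omega), mul_zero,
          Finsupp.single_apply, if_neg (by omega), zero_mul]
  have := key (coeff g) (fun n hn => hg n (by omega))
  rwa [coeff.symm_apply_apply] at this

lemma aux_char3 (co : R ≃+ (ℕ →₀ D)) (hc : ∀ a : D, a + a + a = 0) :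
    ∀ x : R, x + x + x = 0 := by
  intro x
  have h : co (x + x + x) = co (0 : R) := by
    rw [map_zero]
    ext n
    simp only [map_add, Finsupp.add_apply, Finsupp.coe_zero, Pi.zero_apply]
    exact hc _
  exact co.injective h


lemma aux_sq (hR : IsDiffPolyRing δ i t coeff) (z : D) :
    (t - i z) ^ 2 = t ^ 2 - (i z * t + i z * t) + (i z * i z - i (δ z)) := by
  have hz := hR.1 z
  have e1 : (t - i z) ^ 2 = t * t - t * i z - i z * t + i z * i z := by noncomm_ring
  rw [e1, hz]
  noncomm_ring

lemma aux_cube (hR : IsDiffPolyRing δ i t coeff) (h3R : ∀ x : R, x + x + x = 0) (z : D) :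
    (t - i z) ^ 3 = t ^ 3 - i (z * z * z + δ (δ z) + (z * δ z - δ z * z)) := by
  have hz := hR.1 z
  have hdz := hR.1 (δ z)
  have e1 : (t - i z) ^ 3 = (t - i z) ^ 2 * (t - i z) := by noncomm_ring
  rw [e1, aux_sq hR z]
  have e2 : (t ^ 2 - (i z * t + i z * t) + (i z * i z - i (δ z))) * (t - i z)
      = t ^ 3 - t * (t * i z) - (i z * (t * t) + i z * (t * t))
        + (i z * (t * i z) + i z * (t * i z))
        + i z * i z * t - i z * (i z * i z) - i (δ z) * t + i (δ z) * i z := by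
    noncomm_ring
  rw [e2, hz]
  have e3 : t * (i z * t + i (δ z)) = t * i z * t + t * i (δ z) := by noncomm_ring
  rw [e3, hz, hdz]
  have hV : i (z * z * z + δ (δ z) + (z * δ z - δ z * z))
      = i z * (i z * i z) + i (δ (δ z)) + (i z * i (δ z) - i (δ z) * i z) := by
    simp [map_add, map_sub, map_mul, mul_assoc]
  rw [hV, ← sub_eq_zero]
  rw [show t ^ 3 - ((i z * t + i (δ z)) * t + (i (δ z) * t + i (δ (δ z))))
        - (i z * (t * t) + i z * (t * t))
        + (i z * (i z * t + i (δ z)) + i z * (i z * t + i (δ z)))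
        + i z * i z * t - i z * (i z * i z) - i (δ z) * t + i (δ z) * i z
      - (t ^ 3 - (i z * (i z * i z) + i (δ (δ z)) + (i z * i (δ z) - i (δ z) * i z)))
      = -(i z * (t * t) + i z * (t * t) + i z * (t * t))
        - (i (δ z) * t + i (δ z) * t + i (δ z) * t)
        + (i z * (i z * t) + i z * (i z * t) + i z * (i z * t))
        + (i z * i (δ z) + i z * i (δ z) + i z * i (δ z)) from by noncomm_ring]
  rw [h3R (i z * (t * t)), h3R (i (δ z) * t), h3R (i z * (i z * t)), h3R (i z * i (δ z))]
  simp

lemma aux_factr (hR : IsDiffPolyRing δ i t coeff) (h3R : ∀ x : R, x + x + x = 0) (z c : D) :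
    ((t - i z) ^ 2 - i c) * (t - i z)
      = t ^ 3 - i c * t - i ((z * z * z + δ (δ z) + (z * δ z - δ z * z)) - c * z) := by
  have e : ((t - i z) ^ 2 - i c) * (t - i z)
      = (t - i z) ^ 3 - (i c * t - i c * i z) := by noncomm_ring
  rw [e, aux_cube hR h3R z]
  simp only [map_sub, map_add, map_mul]
  noncomm_ring

lemma aux_factl (hR : IsDiffPolyRing δ i t coeff) (h3R : ∀ x : R, x + x + x = 0) (z c : D) :
    (t - i z) * ((t - i z) ^ 2 - i c)
      = t ^ 3 - i c * t - i ((z * z * z + δ (δ z) + (z * δ z - δ z * z)) - z * c + δ c) := by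
  have hc := hR.1 c
  have e : (t - i z) * ((t - i z) ^ 2 - i c)
      = (t - i z) ^ 3 - (t * i c - i z * i c) := by noncomm_ring
  rw [e, aux_cube hR h3R z, hc]
  simp only [map_sub, map_add, map_mul]
  noncomm_ring

lemma aux_Vp (hR : IsDiffPolyRing δ i t coeff) (h3R : ∀ x : R, x + x + x = 0) (z : D) :
    Vp coeff i t 3 z = z * z * z + δ (δ z) + (z * δ z - δ z * z) := by
  unfold Vp
  rw [aux_cube hR h3R z, sub_sub_cancel, aux_ci hR]
  simp

end Aux

/-- in characteristic 3, `f(t) = t³ − ct − d ∈ D[t;δ]` is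
irreducible iff `V₃(z) − cz ≠ d` and `V₃(z) − zc + δ(c) ≠ d` for all `z ∈ D`. -/
theorem stmt_3 {D R : Type*} [DivisionRing D] [Ring R] [CharP D 3]
    (δ : D → D) (hδ : IsDeriv δ)
    (i : D →+* R) (t : R) (coeff : R ≃+ (ℕ →₀ D))
    (hR : IsDiffPolyRing δ i t coeff)
    (c d : D) (f : R) (hfdef : f = t ^ 3 - i c * t - i d) :
    IrredDeg coeff 3 f ↔
      ∀ z : D, Vp coeff i t 3 z - c * z ≠ d ∧ Vp coeff i t 3 z - z * c + δ c ≠ d := by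
  have h3D : ∀ a : D, a + a + a = 0 := by
    intro a
    have h3 : (3 : D) = 0 := by
      have := CharP.cast_eq_zero D 3
      simpa using this
    calc a + a + a = (1 + 1 + 1) * a := by rw [add_mul, add_mul, one_mul]
    _ = (3 : D) * a := by norm_num
    _ = 0 := by rw [h3, zero_mul]
  have h3R : ∀ x : R, x + x + x = 0 := aux_char3 coeff h3D
  have hcf : ∀ n, coeff f n
      = Finsupp.single 3 (1 : D) n - Finsupp.single 1 c n - Finsupp.single 0 d n := by
    intro n
    rw [hfdef]
    simp only [map_sub, Finsupp.sub_apply]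
    rw [aux_ctpow hR, aux_cit hR, aux_ci hR]
  have hcf3 : coeff f 3 = 1 := by rw [hcf]; simp [Finsupp.single_apply]
  have hcf4 : coeff f 4 = 0 := by rw [hcf]; simp [Finsupp.single_apply]
  have hlinDeg : ∀ z : D, DegLt coeff 2 (t - i z) := by
    intro z n hn
    rw [map_sub, Finsupp.sub_apply, aux_ct hR, aux_ci hR,
      Finsupp.single_apply, Finsupp.single_apply, if_neg (by omega : ¬ 1 = n),
      if_neg (by omega : ¬ 0 = n)]
    simp
  have hlin1 : ∀ z : D, coeff (t - i z) 1 = 1 := by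
    intro z
    rw [map_sub, Finsupp.sub_apply, aux_ct hR, aux_ci hR]
    simp [Finsupp.single_apply]
  have hqDeg : ∀ z : D, DegLt coeff 3 ((t - i z) ^ 2 - i c) := by
    intro z n hn
    rw [aux_sq hR z]
    simp only [map_sub, map_add, Finsupp.sub_apply, Finsupp.add_apply]
    rw [aux_ctpow hR, aux_cit hR, ← map_mul, aux_ci hR, aux_ci hR, aux_ci hR]
    simp only [Finsupp.single_apply, if_neg (show ¬ 2 = n by omega),
      if_neg (show ¬ 1 = n by omega), if_neg (show ¬ 0 = n by omega)]
    simp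
  constructor
  · intro hirr z
    constructor
    · intro heq
      apply hirr
      refine ⟨(t - i z) ^ 2 - i c, t - i z, ?_, hqDeg z, fun n hn => hlinDeg z n (by omega)⟩
      rw [aux_factr hR h3R z c, hfdef]
      rw [show (z * z * z + δ (δ z) + (z * δ z - δ z * z)) - c * z = d from by
        rw [← aux_Vp hR h3R z]; exact heq]
    · intro heq
      apply hirr
      refine ⟨t - i z, (t - i z) ^ 2 - i c, ?_, fun n hn => hlinDeg z n (by omega), hqDeg z⟩
      rw [aux_factl hR h3R z c, hfdef]
      rw [show (z * z * z + δ (δ z) + (z * δ z - δ z * z)) - z * c + δ c = d from by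
        rw [← aux_Vp hR h3R z]; exact heq]
  · rintro hcond ⟨g, h, hf, hg, hh⟩
    have top4 : coeff g 2 * coeff h 2 = 0 := by
      calc coeff g 2 * coeff h 2 = coeff (g * h) (2 + 2) :=
            (aux_mul_top hR hδ 2 2 g h hg hh).symm
      _ = coeff f 4 := by rw [← hf]
      _ = 0 := hcf4
    by_cases hh2 : coeff h 2 = 0
    · -- right linear factor t - i z
      have hhd : DegLt coeff 2 h := by
        intro n hn
        rcases Nat.lt_or_ge n 3 with h3 | h3
        · have : n = 2 := by omega
          rw [this]; exact hh2
        · exact hh n h3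
      have h13 : coeff g 2 * coeff h 1 = 1 := by
        calc coeff g 2 * coeff h 1 = coeff (g * h) (2 + 1) :=
              (aux_mul_top hR hδ 2 1 g h hg hhd).symm
        _ = coeff f 3 := by rw [← hf]
        _ = 1 := hcf3
      have hh1 : coeff h 1 ≠ 0 := by
        intro h0
        rw [h0, mul_zero] at h13
        exact one_ne_zero h13.symm
      set h1 := coeff h 1 with hh1def
      set h0 := coeff h 0 with hh0def
      set z := -(h1⁻¹ * h0) with hzdef
      have hhfact : h = i h1 * (t - i z) := by
        apply coeff.injective
        ext n
        rw [aux_imul hR, map_sub, Finsupp.sub_apply, aux_ct hR, aux_ci hR]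
        rcases n with _ | _ | n
        · rw [Finsupp.single_eq_of_ne' (by omega : (1:ℕ) ≠ 0), Finsupp.single_eq_same,
            zero_sub, hzdef, neg_neg, ← mul_assoc, mul_inv_cancel₀ hh1, one_mul]
        · simp [Finsupp.single_apply, hh1def]
        · rw [hhd (n + 2) (by omega)]
          simp [Finsupp.single_apply]
      exfalso
      set e := Vp coeff i t 3 z - c * z - d with hedef
      have hxeq : (g * i h1 - ((t - i z) ^ 2 - i c)) * (t - i z) = i e := by
        rw [sub_mul, aux_factr hR h3R z c]
        rw [show g * i h1 * (t - i z) = f from by rw [hf, hhfact, mul_assoc]]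
        rw [hfdef, hedef, aux_Vp hR h3R z]
        simp only [map_sub, map_add]
        abel
      rcases eq_or_ne (g * i h1 - ((t - i z) ^ 2 - i c)) 0 with hx0 | hx0
      · rw [hx0, zero_mul] at hxeq
        have he : e = 0 := aux_i_inj hR hxeq.symm
        rw [hedef] at he
        exact (hcond z).1 (sub_eq_zero.mp he)
      · set x := g * i h1 - ((t - i z) ^ 2 - i c) with hxdef
        have hcx : coeff x ≠ 0 := fun hc0 => hx0 (by
          apply coeff.injective; rw [hc0, map_zero])
        have hsupp : (coeff x).support.Nonempty := Finsupp.support_nonempty_iff.mpr hcx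
        set k := (coeff x).support.max' hsupp with hkdef
        have hkne : coeff x k ≠ 0 := Finsupp.mem_support_iff.mp (Finset.max'_mem _ _)
        have hxd : DegLt coeff (k + 1) x := by
          intro n hn
          by_contra hne
          have := Finset.le_max' (coeff x).support n (Finsupp.mem_support_iff.mpr hne)
          omega
        have htop := aux_mul_top hR hδ k 1 x (t - i z) hxd (fun n hn => hlinDeg z n hn)
        rw [hlin1 z, mul_one, hxeq, aux_ci hR,
          Finsupp.single_apply, if_neg (by omega : ¬ (0:ℕ) = k + 1)] at htop
        exact hkne htop.symm
    · -- left linear factor t - i w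
      have hg2 : coeff g 2 = 0 := by
        rcases mul_eq_zero.mp top4 with h' | h'
        · exact h'
        · exact absurd h' hh2
      have hgd : DegLt coeff 2 g := by
        intro n hn
        rcases Nat.lt_or_ge n 3 with h3 | h3
        · have : n = 2 := by omega
          rw [this]; exact hg2
        · exact hg n h3
      have h13 : coeff g 1 * coeff h 2 = 1 := by
        calc coeff g 1 * coeff h 2 = coeff (g * h) (1 + 2) :=
              (aux_mul_top hR hδ 1 2 g h hgd hh).symm
        _ = coeff f 3 := by rw [← hf]
        _ = 1 := hcf3
      have hg1 : coeff g 1 ≠ 0 := by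
        intro h0
        rw [h0, zero_mul] at h13
        exact one_ne_zero h13.symm
      set g1 := coeff g 1 with hg1def
      set g0 := coeff g 0 with hg0def
      set w := (δ g1 - g0) * g1⁻¹ with hwdef
      have hgfact : g = (t - i w) * i g1 := by
        have expand : (t - i w) * i g1 = i g1 * t + i (δ g1 - w * g1) := by
          rw [sub_mul, hR.1 g1, ← map_mul, map_sub]
          abel
        apply coeff.injective
        ext n
        rw [expand, map_add, Finsupp.add_apply, aux_cit hR, aux_ci hR]
        rcases n with _ | _ | n
        · rw [Finsupp.single_eq_of_ne' (by omega : (1:ℕ) ≠ 0), Finsupp.single_eq_same,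
            zero_add, hwdef, mul_assoc, inv_mul_cancel₀ hg1, mul_one, sub_sub_cancel]
        · simp [Finsupp.single_apply, hg1def]
        · rw [hgd (n + 2) (by omega)]
          simp [Finsupp.single_apply]
      exfalso
      set e := Vp coeff i t 3 w - w * c + δ c - d with hedef
      have hxeq : (t - i w) * (i g1 * h - ((t - i w) ^ 2 - i c)) = i e := by
        rw [mul_sub, aux_factl hR h3R w c]
        rw [show (t - i w) * (i g1 * h) = f from by rw [hf, hgfact, mul_assoc]]
        rw [hfdef, hedef, aux_Vp hR h3R w]
        simp only [map_sub, map_add]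
        abel
      rcases eq_or_ne (i g1 * h - ((t - i w) ^ 2 - i c)) 0 with hx0 | hx0
      · rw [hx0, mul_zero] at hxeq
        have he : e = 0 := aux_i_inj hR hxeq.symm
        rw [hedef] at he
        have : Vp coeff i t 3 w - w * c + δ c = d := by
          have := sub_eq_zero.mp he
          exact this
        exact (hcond w).2 this
      · set x := i g1 * h - ((t - i w) ^ 2 - i c) with hxdef
        have hcx : coeff x ≠ 0 := fun hc0 => hx0 (by
          apply coeff.injective; rw [hc0, map_zero])
        have hsupp : (coeff x).support.Nonempty := Finsupp.support_nonempty_iff.mpr hcx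
        set k := (coeff x).support.max' hsupp with hkdef
        have hkne : coeff x k ≠ 0 := Finsupp.mem_support_iff.mp (Finset.max'_mem _ _)
        have hxd : DegLt coeff (k + 1) x := by
          intro n hn
          by_contra hne
          have := Finset.le_max' (coeff x).support n (Finsupp.mem_support_iff.mpr hne)
          omega
        have htop := aux_mul_top hR hδ 1 k (t - i w) x (fun n hn => hlinDeg w n hn) hxd
        rw [hlin1 w, one_mul, hxeq, aux_ci hR,
          Finsupp.single_apply, if_neg (by omega : ¬ (0:ℕ) = 1 + k)] at htop
        exact hkne htop.symm
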